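/- For every integer t ≥ 0 there exists a tree T on exactly (t³ + 6t² + 17t + 18)/6 vertices such that f(T) = t + 1. -/

import Mathlib

open Finset

variable {V : Type*}

open scoped Classical in
/-- Degree of `v` in the subgraph of `G` induced on the vertex set `A`
(number of neighbours of `v` inside `A`). -/
noncomputable def degOn (G : SimpleGraph V) (A : Finset V) (v : V) : ℕ :=
  (A.filter fun w => G.Adj v w).card

/-- Maximum degree of the subgraph of `G` induced on `A`. -/
noncomputable def maxDegOn (G : SimpleGraph V) (A : Finset V) : ℕ :=
  A.sup (degOn G A)

open scoped Classical in
/-- The subgraph of `G` induced on `A` has fewer than `k` vertices or at least `k`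
vertices realising its maximum degree. -/
def equates (G : SimpleGraph V) (k : ℕ) (A : Finset V) : Prop :=
  A.card < k ∨ k ≤ (A.filter fun v => degOn G A v = maxDegOn G A).card

open scoped Classical in
/-- `f_k` of the subgraph of `G` induced on `A`: the minimum number of vertices of `A`
whose deletion leaves an induced subgraph with fewer than `k` vertices or with at
least `k` vertices realising its maximum degree. -/
noncomputable def fkOn (G : SimpleGraph V) (k : ℕ) (A : Finset V) : ℕ :=
  sInf {m | ∃ S, S ⊆ A ∧ S.card = m ∧ equates G k (A \ S)}

/-- `f_k(G)`. -/
noncomputable def fk [Fintype V] (G : SimpleGraph V) (k : ℕ) : ℕ :=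
  fkOn G k Finset.univ

/-- `diff` of the subgraph of `G` induced on `A`: the largest degree minus the
second-largest degree (with multiplicity) of this subgraph. -/
noncomputable def diffOn (G : SimpleGraph V) (A : Finset V) : ℕ :=
  maxDegOn G A - ((A.val.map (degOn G A)).erase (maxDegOn G A)).sup

/-- `diff(G) = d₁ - d₂`, the difference between the largest and second-largest
vertex degrees of `G`. -/
noncomputable def diffDeg [Fintype V] (G : SimpleGraph V) : ℕ :=
  diffOn G Finset.univ


namespace Stmt14

/-- hub degrees -/
def Dd : ℕ → ℕ
  | 0 => 2
  | s+1 => Dd s + s + 2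

/-- block start positions -/
def st : ℕ → ℕ
  | 0 => 0
  | s+1 => st s + Dd s

lemma Dd_two_le (s : ℕ) : 2 ≤ Dd s := by
  induction s with
  | zero => simp [Dd]
  | succ s ih => simp only [Dd]; omega

lemma st_succ (s : ℕ) : st (s+1) = st s + Dd s := rfl

lemma st_lt_succ (s : ℕ) : st s + 2 ≤ st (s+1) := by
  have := Dd_two_le s; rw [st_succ]; omega

lemma st_strictMono : StrictMono st := by
  apply strictMono_nat_of_lt_succ
  intro s; have := st_lt_succ s; omega

lemma st_le_st {a b : ℕ} (h : a ≤ b) : st a ≤ st b := st_strictMono.monotone h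

lemma two_mul_le_st (s : ℕ) : 2 * s ≤ st s := by
  induction s with
  | zero => simp [st]
  | succ s ih => have := Dd_two_le s; rw [st_succ]; omega

lemma Dd_gap {j i : ℕ} (h : j < i) : Dd j + i + 1 ≤ Dd i := by
  induction i with
  | zero => omega
  | succ i ih =>
    rcases Nat.lt_succ_iff_lt_or_eq.mp h with h' | rfl
    · have := ih h'; simp only [Dd]; omega
    · simp only [Dd]; omega

lemma st_ne_hub (s r : ℕ) : st s ≠ st r + 1 := by
  rcases le_or_gt s r with h | h
  · have := st_le_st h; omega
  · have h3 : st (r+1) ≤ st s := st_le_st (by omega)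
    have := st_lt_succ r
    omega

/-- block index of a vertex -/
def blk (v : ℕ) : ℕ := Nat.findGreatest (fun s => st s < v) v

/-- parent of a vertex -/
def pa (v : ℕ) : ℕ := if v ≤ st (blk v) + 1 then st (blk v) else st (blk v) + 1

lemma st_blk_lt {v : ℕ} (h : 1 ≤ v) : st (blk v) < v :=
  Nat.findGreatest_spec (P := fun s => st s < v) (Nat.zero_le v) (by simp [st]; omega)

lemma le_st_blk_succ {v : ℕ} (h : 1 ≤ v) : v ≤ st (blk v + 1) := by
  by_contra hc
  push_neg at hc
  have hsle : blk v + 1 ≤ v := by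
    have := two_mul_le_st (blk v + 1); omega
  exact Nat.findGreatest_is_greatest (Nat.lt_succ_self _) hsle hc

lemma blk_eq {s v : ℕ} (h1 : st s < v) (h2 : v ≤ st (s+1)) : blk v = s := by
  have hv1 : 1 ≤ v := by omega
  have hle : s ≤ blk v := by
    have hb : s ≤ v := by have := two_mul_le_st s; omega
    exact Nat.le_findGreatest hb h1
  have hge : blk v ≤ s := by
    by_contra hc
    push_neg at hc
    have : st (s+1) ≤ st (blk v) := st_le_st hc
    have := st_blk_lt hv1
    omega
  omega

lemma pa_zero : pa 0 = 0 := by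
  have : blk 0 = 0 := by
    unfold blk
    simp [Nat.findGreatest]
  simp [pa, this, st]

lemma pa_lt {v : ℕ} (h : 1 ≤ v) : pa v < v := by
  have h1 := st_blk_lt h
  unfold pa
  split <;> omega

lemma pa_le (v : ℕ) : pa v ≤ v := by
  rcases Nat.eq_zero_or_pos v with rfl | h
  · simp [pa_zero]
  · exact le_of_lt (pa_lt h)

lemma pa_hub (s : ℕ) : pa (st s + 1) = st s := by
  have hb : blk (st s + 1) = s := blk_eq (by omega) (by have := st_lt_succ s; omega)
  simp [pa, hb]

lemma pa_child {s v : ℕ} (h1 : st s + 2 ≤ v) (h2 : v ≤ st (s+1)) : pa v = st s + 1 := by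
  have hb : blk v = s := blk_eq (by omega) h2
  rw [pa, hb, if_neg (by omega)]

/-- every positive vertex: either it's a hub and pa is block start, or pa is the block's hub -/
lemma pa_cases {v : ℕ} (h : 1 ≤ v) :
    (v = st (blk v) + 1 ∧ pa v = st (blk v)) ∨
    (st (blk v) + 2 ≤ v ∧ v ≤ st (blk v + 1) ∧ pa v = st (blk v) + 1) := by
  have h1 := st_blk_lt h
  have h2 := le_st_blk_succ h
  rcases eq_or_ne v (st (blk v) + 1) with he | hne
  · left; exact ⟨he, by rw [pa, if_pos (by omega)]⟩
  · right
    refine ⟨by omega, h2, ?_⟩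
    rw [pa, if_neg (by omega)]

lemma nonhub_pa {v : ℕ} (h1 : 1 ≤ v) (h : ∀ s, v ≠ st s + 1) :
    pa v = st (blk v) + 1 := by
  rcases pa_cases h1 with ⟨he, _⟩ | ⟨_, _, hp⟩
  · exact absurd he (h _)
  · exact hp

lemma pa_eq_st {v s : ℕ} (h1 : 1 ≤ v) (h : pa v = st s) : v = st s + 1 := by
  rcases pa_cases h1 with ⟨he, hp⟩ | ⟨_, _, hp⟩
  · rw [hp] at h
    have : blk v = s := st_strictMono.injective h
    rw [← this]; exact he
  · rw [hp] at h
    exact absurd h.symm (st_ne_hub s (blk v))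

lemma pa_eq_hub {v s : ℕ} (h1 : 1 ≤ v) (h : pa v = st s + 1) :
    st s + 2 ≤ v ∧ v ≤ st (s+1) := by
  rcases pa_cases h1 with ⟨he, hp⟩ | ⟨hl, hr, hp⟩
  · rw [hp] at h
    exact absurd h (st_ne_hub (blk v) s)
  · rw [hp] at h
    have hbs : blk v = s := by
      have := Nat.succ_injective h
      exact st_strictMono.injective this
    rw [hbs] at hl hr
    exact ⟨hl, hr⟩

lemma no_hub_in_children {s r x : ℕ} (h1 : st s + 2 ≤ x) (h2 : x ≤ st (s+1)) :
    x ≠ st r + 1 := by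
  rintro rfl
  rcases le_or_gt r s with h | h
  · have := st_le_st h; omega
  · have : st (s+1) ≤ st r := st_le_st (by omega); omega


open Finset

/-- The tree: vertex `v ≥ 1` is adjacent to its parent `pa v`. -/
def Gr (t : ℕ) : SimpleGraph (Fin (st (t+1) + 1)) where
  Adj u v := (u.val = pa v.val ∧ 1 ≤ v.val) ∨ (v.val = pa u.val ∧ 1 ≤ u.val)
  symm := ⟨by intro u v h; tauto⟩
  loopless := ⟨by
    intro v h
    rcases h with ⟨h1, h2⟩ | ⟨h1, h2⟩ <;> [skip; skip] <;>
      exact absurd h1.symm (Nat.ne_of_lt (pa_lt h2))⟩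

lemma gr_adj {t : ℕ} {u v : Fin (st (t+1) + 1)} :
    (Gr t).Adj u v ↔ (u.val = pa v.val ∧ 1 ≤ v.val) ∨ (v.val = pa u.val ∧ 1 ≤ u.val) :=
  Iff.rfl

/-- total hub function: for `s ≤ t`, the hub of block `s`. -/
def hubV (t s : ℕ) : Fin (st (t+1) + 1) :=
  ⟨st (min s t) + 1, by
    have h1 : st (min s t) ≤ st t := st_le_st (min_le_right s t)
    have h2 := st_lt_succ t
    omega⟩

lemma hubV_val {t s : ℕ} (h : s ≤ t) : (hubV t s).val = st s + 1 := by
  simp [hubV, min_eq_left h]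

lemma val_le_st {t : ℕ} (v : Fin (st (t+1) + 1)) : v.val ≤ st (t+1) := by
  omega

lemma blk_le_t {t : ℕ} {v : Fin (st (t+1) + 1)} (h : 1 ≤ v.val) : blk v.val ≤ t := by
  have h1 := st_blk_lt h
  have h2 := val_le_st v
  by_contra hc
  push_neg at hc
  have : st (t+1) ≤ st (blk v.val) := st_le_st hc
  omega

/-- neighbours of the hub of block `s`: the block start, and the children interval. -/
lemma adj_hub {t s : ℕ} (hs : s ≤ t) (u : Fin (st (t+1) + 1)) :
    (Gr t).Adj (hubV t s) u ↔
      (u.val = st s ∨ (st s + 2 ≤ u.val ∧ u.val ≤ st (s+1))) := by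
  rw [gr_adj, hubV_val hs]
  constructor
  · rintro (⟨h1, h2⟩ | ⟨h1, h2⟩)
    · right; exact pa_eq_hub h2 h1.symm
    · left; rw [h1, pa_hub]
  · rintro (h | ⟨h1, h2⟩)
    · right
      constructor
      · rw [h, pa_hub]
      · omega
    · left
      exact ⟨(pa_child h1 h2).symm, by omega⟩

/-- every neighbour of a non-hub vertex is a hub -/
lemma adj_nonhub_hub {t : ℕ} {w u : Fin (st (t+1) + 1)}
    (hw : ∀ s, w.val ≠ st s + 1) (h : (Gr t).Adj w u) :
    ∃ s, s ≤ t ∧ u.val = st s + 1 := by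
  rcases gr_adj.mp h with ⟨h1, h2⟩ | ⟨h1, h2⟩
  · -- w = pa u, u is a child of w; since w non-hub, pa u = st (blk u), so u is the block hub
    rcases pa_cases h2 with ⟨he, hp⟩ | ⟨_, _, hp⟩
    · refine ⟨blk u.val, blk_le_t h2, he⟩
    · rw [hp] at h1; exact absurd h1 (hw _)
  · -- u = pa w
    refine ⟨blk w.val, blk_le_t h2, ?_⟩
    rw [h1, nonhub_pa h2 (fun s => hw s)]

/-- a non-hub vertex has at most the two neighbours `pa w` and `w+1` -/
lemma adj_nonhub_two {t : ℕ} {w u : Fin (st (t+1) + 1)}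
    (hw : ∀ s, w.val ≠ st s + 1) (h : (Gr t).Adj w u) :
    u.val = pa w.val ∨ u.val = w.val + 1 := by
  rcases gr_adj.mp h with ⟨h1, h2⟩ | ⟨h1, h2⟩
  · rcases pa_cases h2 with ⟨he, hp⟩ | ⟨_, _, hp⟩
    · right; rw [he, ← hp, ← h1]
    · rw [hp] at h1; exact absurd h1 (hw _)
  · left; exact h1

section Counting

open scoped Classical

variable {W : Type*}

lemma degOn_le_card (G : SimpleGraph W) (A : Finset W) (v : W) (T : Finset W)
    (h : ∀ w ∈ A, G.Adj v w → w ∈ T) : degOn G A v ≤ T.card := by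
  classical
  unfold degOn
  refine Finset.card_le_card ?_
  intro w hw
  rw [Finset.mem_filter] at hw
  exact h w hw.1 hw.2

lemma card_le_degOn (G : SimpleGraph W) (A : Finset W) (v : W) (T : Finset W)
    (h : ∀ w ∈ T, w ∈ A ∧ G.Adj v w) : T.card ≤ degOn G A v := by
  classical
  unfold degOn
  refine Finset.card_le_card ?_
  intro w hw
  rw [Finset.mem_filter]
  exact h w hw

lemma degOn_eq_card (G : SimpleGraph W) (A : Finset W) (v : W) (T : Finset W)
    (h : ∀ w, w ∈ T ↔ w ∈ A ∧ G.Adj v w) : degOn G A v = T.card := by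
  classical
  unfold degOn
  congr 1
  ext w
  rw [Finset.mem_filter]
  exact (h w).symm

lemma maxDegOn_eq (G : SimpleGraph W) (A : Finset W) (v : W) (hv : v ∈ A)
    (h : ∀ w ∈ A, degOn G A w ≤ degOn G A v) : maxDegOn G A = degOn G A v :=
  le_antisymm (Finset.sup_le h) (Finset.le_sup hv)

lemma achievers_eq_singleton (G : SimpleGraph W) (A : Finset W) (v : W) (hv : v ∈ A)
    (h : ∀ w ∈ A, w ≠ v → degOn G A w < degOn G A v) :
    (A.filter fun w => degOn G A w = maxDegOn G A) = {v} := by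
  have hmax : maxDegOn G A = degOn G A v := by
    refine maxDegOn_eq G A v hv (fun w hw => ?_)
    rcases eq_or_ne w v with rfl | h'
    · exact le_rfl
    · exact (h w hw h').le
  ext w
  rw [Finset.mem_filter, Finset.mem_singleton, hmax]
  constructor
  · rintro ⟨hwA, hd⟩
    by_contra hne
    exact absurd hd (Nat.ne_of_lt (h w hwA hne))
  · rintro rfl
    exact ⟨hv, rfl⟩

lemma not_equates_of_unique_max (G : SimpleGraph W) (A : Finset W) (v : W)
    (h2 : 2 ≤ A.card) (hv : v ∈ A)
    (h : ∀ w ∈ A, w ≠ v → degOn G A w < degOn G A v) : ¬ equates G 2 A := by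
  intro he
  rcases he with hlt | hge
  · omega
  · rw [achievers_eq_singleton G A v hv h] at hge
    simp at hge

lemma equates_of_two (G : SimpleGraph W) (A : Finset W) (v₁ v₂ : W)
    (hne : v₁ ≠ v₂) (h1 : v₁ ∈ A) (h2 : v₂ ∈ A)
    (hd1 : degOn G A v₁ = maxDegOn G A) (hd2 : degOn G A v₂ = maxDegOn G A) :
    equates G 2 A := by
  right
  have hsub : ({v₁, v₂} : Finset W) ⊆ A.filter fun w => degOn G A w = maxDegOn G A := by
    intro w hw
    rw [Finset.mem_insert, Finset.mem_singleton] at hw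
    rw [Finset.mem_filter]
    rcases hw with rfl | rfl
    · exact ⟨h1, hd1⟩
    · exact ⟨h2, hd2⟩
  calc 2 = ({v₁, v₂} : Finset W).card := by rw [Finset.card_pair hne]
    _ ≤ _ := Finset.card_le_card hsub

end Counting

section FinCount

lemma card_le_natcard {n : ℕ} (s : Finset (Fin n)) (T : Finset ℕ)
    (h : ∀ u ∈ s, u.val ∈ T) : s.card ≤ T.card :=
  Finset.card_le_card_of_injOn Fin.val h (fun a _ b _ hab => Fin.val_injective hab)

lemma degOn_le_natcard {n : ℕ} (G : SimpleGraph (Fin n)) (A : Finset (Fin n)) (v : Fin n)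
    (T : Finset ℕ) (h : ∀ w ∈ A, G.Adj v w → w.val ∈ T) : degOn G A v ≤ T.card := by
  classical
  unfold degOn
  refine card_le_natcard _ _ ?_
  intro w hw
  rw [Finset.mem_filter] at hw
  exact h w hw.1 hw.2

lemma card_filter_val_mem {n : ℕ} (T : Finset ℕ) (hT : ∀ x ∈ T, x < n) :
    (Finset.univ.filter fun u : Fin n => u.val ∈ T).card = T.card := by
  classical
  refine Finset.card_bij (fun u _ => u.val) ?_ ?_ ?_
  · intro a ha
    rw [Finset.mem_filter] at ha
    exact ha.2
  · intro a ha b hb hab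
    exact Fin.val_injective hab
  · intro x hx
    refine ⟨⟨x, hT x hx⟩, ?_, rfl⟩
    rw [Finset.mem_filter]
    exact ⟨Finset.mem_univ _, hx⟩

end FinCount

section GraphDegrees

open scoped Classical

lemma st_zero : st 0 = 0 := rfl
lemma Dd_zero : Dd 0 = 2 := rfl
lemma st_one : st 1 = 2 := rfl

lemma st_ne_one (s : ℕ) : st s ≠ 1 := by
  cases s with
  | zero => simp [st_zero]
  | succ s =>
    have h1 : st 1 ≤ st (s+1) := st_le_st (by omega)
    rw [st_one] at h1
    omega

lemma card_hubT (s : ℕ) :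
    (insert (st s) (Finset.Icc (st s + 2) (st (s+1)))).card = Dd s := by
  have hnotin : st s ∉ Finset.Icc (st s + 2) (st (s+1)) := by
    rw [Finset.mem_Icc]; omega
  rw [Finset.card_insert_of_notMem hnotin, Nat.card_Icc]
  have := Dd_two_le s
  rw [st_succ]
  omega

lemma deg_hub_upper (t : ℕ) (A : Finset (Fin (st (t+1) + 1))) {s : ℕ} (hs : s ≤ t) :
    degOn (Gr t) A (hubV t s) ≤ Dd s := by
  rw [← card_hubT s]
  refine degOn_le_natcard _ _ _ _ ?_
  intro w _ hadj
  rcases (adj_hub hs w).mp hadj with h | h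
  · simp [h]
  · rw [Finset.mem_insert, Finset.mem_Icc]
    right; exact h

lemma deg_hub_lower (t : ℕ) (S : Finset (Fin (st (t+1) + 1))) {i : ℕ} (hi : i ≤ t) :
    Dd i ≤ degOn (Gr t) (Finset.univ \ S) (hubV t i)
      + (S.filter (fun u => ∀ r, u.val ≠ st r + 1)).card := by
  set NH := Finset.univ.filter
    (fun u : Fin (st (t+1) + 1) => u.val ∈ insert (st i) (Finset.Icc (st i + 2) (st (i+1))))
    with hNH
  have hmemNH : ∀ u : Fin (st (t+1) + 1),
      u ∈ NH ↔ (u.val = st i ∨ (st i + 2 ≤ u.val ∧ u.val ≤ st (i+1))) := by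
    intro u
    rw [hNH, Finset.mem_filter, Finset.mem_insert, Finset.mem_Icc]
    simp
  have hNHnonhub : ∀ u ∈ NH, ∀ r, u.val ≠ st r + 1 := by
    intro u hu r
    rcases (hmemNH u).mp hu with h | ⟨h1, h2⟩
    · rw [h]; exact st_ne_hub i r
    · exact no_hub_in_children h1 h2
  have hcard : NH.card = Dd i := by
    rw [hNH, card_filter_val_mem, card_hubT]
    intro x hx
    rw [Finset.mem_insert, Finset.mem_Icc] at hx
    have h1 : st (i+1) ≤ st (t+1) := st_le_st (by omega)
    have h2 : st i < st (i+1) := st_strictMono (by omega)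
    omega
  have hsplit : (NH \ S).card + (NH ∩ S).card = NH.card :=
    Finset.card_sdiff_add_card_inter NH S
  have h1 : (NH \ S).card ≤ degOn (Gr t) (Finset.univ \ S) (hubV t i) := by
    refine card_le_degOn _ _ _ _ ?_
    intro w hw
    rw [Finset.mem_sdiff] at hw
    constructor
    · rw [Finset.mem_sdiff]; exact ⟨Finset.mem_univ _, hw.2⟩
    · exact (adj_hub hi w).mpr ((hmemNH w).mp hw.1)
  have h2 : (NH ∩ S).card ≤ (S.filter (fun u => ∀ r, u.val ≠ st r + 1)).card := by
    refine Finset.card_le_card ?_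
    intro u hu
    rw [Finset.mem_inter] at hu
    rw [Finset.mem_filter]
    exact ⟨hu.2, hNHnonhub u hu.1⟩
  omega

lemma deg_nonhub_le_two (t : ℕ) (A : Finset (Fin (st (t+1) + 1)))
    {w : Fin (st (t+1) + 1)} (hw : ∀ s, w.val ≠ st s + 1) :
    degOn (Gr t) A w ≤ 2 := by
  have hT : ({pa w.val, w.val + 1} : Finset ℕ).card ≤ 2 :=
    le_trans (Finset.card_insert_le _ _) (by simp)
  refine le_trans (degOn_le_natcard (Gr t) A w ({pa w.val, w.val + 1} : Finset ℕ) ?_) hT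
  intro u hu hadj
  rcases adj_nonhub_two hw hadj with h | h <;> simp [h]

lemma deg_le_one_hubdepleted (t : ℕ) (S : Finset (Fin (st (t+1) + 1)))
    (hS : ∀ s, 1 ≤ s → s ≤ t → hubV t s ∈ S)
    {w : Fin (st (t+1) + 1)} (hw : ∀ s, w.val ≠ st s + 1) :
    degOn (Gr t) (Finset.univ \ S) w ≤ 1 := by
  have := degOn_le_natcard (Gr t) (Finset.univ \ S) w {1} ?_
  · simpa using this
  · intro u hu hadj
    obtain ⟨s, hst, hval⟩ := adj_nonhub_hub hw hadj
    rw [Finset.mem_sdiff] at hu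
    rcases Nat.eq_zero_or_pos s with rfl | hs
    · simp [hval, st_zero]
    · exfalso
      apply hu.2
      have : u = hubV t s := Fin.val_injective (by rw [hval, hubV_val hst])
      rw [this]
      exact hS s hs hst

lemma two_le_st_succ (t : ℕ) : 2 ≤ st (t+1) := by
  have := st_le_st (show 1 ≤ t+1 by omega)
  rw [st_one] at this
  omega

lemma deg_hubzero_exact (t : ℕ) (S : Finset (Fin (st (t+1) + 1)))
    (hS : ∀ u ∈ S, ∃ s, u.val = st s + 1) :
    degOn (Gr t) (Finset.univ \ S) (hubV t 0) = 2 := by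
  have h2n : 2 < st (t+1) + 1 := by have := two_le_st_succ t; omega
  have h0n : 0 < st (t+1) + 1 := by omega
  set v0 : Fin (st (t+1) + 1) := ⟨0, h0n⟩
  set v2 : Fin (st (t+1) + 1) := ⟨2, h2n⟩
  have hchar : ∀ w : Fin (st (t+1) + 1),
      w ∈ ({v0, v2} : Finset (Fin (st (t+1) + 1))) ↔
        w ∈ Finset.univ \ S ∧ (Gr t).Adj (hubV t 0) w := by
    intro w
    rw [Finset.mem_insert, Finset.mem_singleton, Finset.mem_sdiff,
      adj_hub (show 0 ≤ t by omega) w]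
    constructor
    · rintro (rfl | rfl)
      · refine ⟨⟨Finset.mem_univ _, ?_⟩, Or.inl rfl⟩
        intro hmem
        obtain ⟨s, hs⟩ := hS v0 hmem
        simp at hs
      · refine ⟨⟨Finset.mem_univ _, ?_⟩, Or.inr ?_⟩
        · intro hmem
          obtain ⟨s, hs⟩ := hS v2 hmem
          have hv2 : v2.val = 2 := rfl
          rw [hv2] at hs
          exact st_ne_one s (by omega)
        · show 0 + 2 ≤ (2:ℕ) ∧ (2:ℕ) ≤ st (0+1)
          rw [show (0:ℕ)+1 = 1 from rfl, st_one]
          omega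
    · rintro ⟨hwA, h | ⟨ha, hb⟩⟩
      · left; exact Fin.val_injective (by rw [st_zero] at h; exact h)
      · right
        rw [show (0:ℕ)+1 = 1 from rfl, st_one] at hb
        rw [st_zero] at ha
        have hv2 : v2.val = 2 := rfl
        exact Fin.val_injective (by omega)
  rw [degOn_eq_card (Gr t) _ _ _ hchar, Finset.card_pair]
  intro h
  have := congrArg Fin.val h
  simp [v0, v2] at this

end GraphDegrees

section Bounds

open scoped Classical

lemma hub_index_le {t r : ℕ} (w : Fin (st (t+1) + 1)) (hr : w.val = st r + 1) : r ≤ t := by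
  have h1 := val_le_st w
  have h2 : st r < st (t+1) := by omega
  have := st_strictMono.lt_iff_lt.mp h2
  omega

lemma hubV_inj {t a b : ℕ} (ha : a ≤ t) (hb : b ≤ t) (h : hubV t a = hubV t b) : a = b := by
  have := congrArg Fin.val h
  rw [hubV_val ha, hubV_val hb] at this
  exact st_strictMono.injective (by omega)

lemma card_univ_sdiff {t : ℕ} (S : Finset (Fin (st (t+1) + 1))) :
    (Finset.univ \ S).card = st (t+1) + 1 - S.card := by
  rw [Finset.card_sdiff, Finset.inter_univ, Finset.card_univ, Fintype.card_fin]

lemma two_le_card_A {t : ℕ} (S : Finset (Fin (st (t+1) + 1))) (hS : S.card ≤ t) :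
    2 ≤ (Finset.univ \ S).card := by
  rw [card_univ_sdiff]
  have := two_mul_le_st (t+1)
  omega

lemma lower_main (t : ℕ) (S : Finset (Fin (st (t+1) + 1))) (hS : S.card ≤ t) :
    ¬ equates (Gr t) 2 (Finset.univ \ S) := by
  have hA2 := two_le_card_A S hS
  -- some hub survives
  have hex : ∃ s, s ≤ t ∧ hubV t s ∉ S := by
    by_contra hc
    push_neg at hc
    have hsub : (Finset.range (t+1)).image (hubV t) ⊆ S := by
      intro u hu
      rw [Finset.mem_image] at hu
      obtain ⟨j, hj, rfl⟩ := hu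
      rw [Finset.mem_range] at hj
      exact hc j (by omega)
    have hcardim : ((Finset.range (t+1)).image (hubV t)).card = t + 1 := by
      rw [Finset.card_image_of_injOn, Finset.card_range]
      intro a ha b hb hab
      rw [Finset.mem_coe, Finset.mem_range] at ha hb
      exact hubV_inj (by omega) (by omega) hab
    have := Finset.card_le_card hsub
    omega
  obtain ⟨s₀, hs₀t, hs₀⟩ := hex
  have hiS : hubV t (Nat.findGreatest (fun s => hubV t s ∉ S) t) ∉ S :=
    Nat.findGreatest_spec (P := fun s => hubV t s ∉ S) hs₀t hs₀
  have hit : Nat.findGreatest (fun s => hubV t s ∉ S) t ≤ t :=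
    Nat.findGreatest_le t
  have hmax : ∀ j, Nat.findGreatest (fun s => hubV t s ∉ S) t < j → j ≤ t →
      hubV t j ∈ S := by
    intro j h1 h2
    by_contra hc
    exact (Nat.findGreatest_is_greatest h1 h2) hc
  set i := Nat.findGreatest (fun s => hubV t s ∉ S) t with hidef
  have hmem : hubV t i ∈ Finset.univ \ S := by
    rw [Finset.mem_sdiff]; exact ⟨Finset.mem_univ _, hiS⟩
  set b := (S.filter (fun u => ∀ r, u.val ≠ st r + 1)).card with hbdef
  -- count hubs inside S
  have hhubs : t - i ≤ (S.filter (fun u => ∃ r, u.val = st r + 1)).card := by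
    have hsub : (Finset.Icc (i+1) t).image (hubV t) ⊆
        S.filter (fun u => ∃ r, u.val = st r + 1) := by
      intro u hu
      rw [Finset.mem_image] at hu
      obtain ⟨j, hj, rfl⟩ := hu
      rw [Finset.mem_Icc] at hj
      rw [Finset.mem_filter]
      exact ⟨hmax j (by omega) hj.2, ⟨j, hubV_val hj.2⟩⟩
    have hcardim : ((Finset.Icc (i+1) t).image (hubV t)).card = t - i := by
      rw [Finset.card_image_of_injOn, Nat.card_Icc]
      · omega
      · intro a ha b hb hab
        rw [Finset.mem_coe, Finset.mem_Icc] at ha hb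
        exact hubV_inj (by omega) (by omega) hab
    calc t - i = ((Finset.Icc (i+1) t).image (hubV t)).card := hcardim.symm
      _ ≤ _ := Finset.card_le_card hsub
  have hsplitS : (S.filter (fun u => ∃ r, u.val = st r + 1)).card + b = S.card := by
    rw [hbdef]
    have : S.filter (fun u => ∀ r, u.val ≠ st r + 1)
        = S.filter (fun u => ¬ ∃ r, u.val = st r + 1) := by
      apply Finset.filter_congr
      intro u _
      push_neg
      rfl
    rw [this]
    exact Finset.card_filter_add_card_filter_not _
  have hb : b ≤ i := by omega
  have hmain := deg_hub_lower t S hit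
  rw [← hbdef] at hmain
  rcases Nat.eq_zero_or_pos i with hi0 | hi1
  · -- i = 0 : S consists exactly of hubs
    have hb0 : b = 0 := by omega
    have hball : ∀ u ∈ S, ∃ r, u.val = st r + 1 := by
      have hempty : S.filter (fun u => ∀ r, u.val ≠ st r + 1) = ∅ :=
        Finset.card_eq_zero.mp hb0
      intro u hu
      by_contra hc
      push_neg at hc
      have : u ∈ S.filter (fun u => ∀ r, u.val ≠ st r + 1) := by
        rw [Finset.mem_filter]; exact ⟨hu, hc⟩
      rw [hempty] at this
      simp at this
    have hd0 : degOn (Gr t) (Finset.univ \ S) (hubV t 0) = 2 :=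
      deg_hubzero_exact t S hball
    rw [hi0] at hmem
    refine not_equates_of_unique_max _ _ (hubV t 0) hA2 hmem ?_
    intro w hw hne
    rw [hd0]
    by_cases hwhub : ∃ r, w.val = st r + 1
    · obtain ⟨r, hr⟩ := hwhub
      have hrt : r ≤ t := hub_index_le w hr
      have hw' : w = hubV t r := Fin.val_injective (by rw [hr, hubV_val hrt])
      rcases Nat.eq_zero_or_pos r with rfl | hr1
      · exact absurd hw' hne
      · exfalso
        rw [Finset.mem_sdiff] at hw
        exact hw.2 (hw' ▸ hmax r (by omega) hrt)
    · push_neg at hwhub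
      have := deg_le_one_hubdepleted t S (fun s h1 h2 => hmax s (by omega) h2) hwhub
      omega
  · -- i ≥ 1
    have hgap0 : Dd 0 + i + 1 ≤ Dd i := Dd_gap hi1
    rw [Dd_zero] at hgap0
    have hdegge : 3 ≤ degOn (Gr t) (Finset.univ \ S) (hubV t i) := by omega
    refine not_equates_of_unique_max _ _ (hubV t i) hA2 hmem ?_
    intro w hw hne
    by_cases hwhub : ∃ r, w.val = st r + 1
    · obtain ⟨r, hr⟩ := hwhub
      have hrt : r ≤ t := hub_index_le w hr
      have hw' : w = hubV t r := Fin.val_injective (by rw [hr, hubV_val hrt])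
      have hri : r < i := by
        rcases lt_trichotomy r i with h | h | h
        · exact h
        · exact absurd (hw'.trans (by rw [h])) hne
        · exfalso
          rw [Finset.mem_sdiff] at hw
          exact hw.2 (hw' ▸ hmax r h hrt)
      have hgap : Dd r + i + 1 ≤ Dd i := Dd_gap hri
      have hup := deg_hub_upper t (Finset.univ \ S) hrt
      rw [hw']
      omega
    · push_neg at hwhub
      have := deg_nonhub_le_two t (Finset.univ \ S) hwhub
      omega

/-- the deletion set achieving `f = t+1` -/
def S0 (t : ℕ) : Finset (Fin (st (t+1) + 1)) :=
  insert ⟨0, by omega⟩ ((Finset.Icc 1 t).image (hubV t))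

lemma card_S0 (t : ℕ) : (S0 t).card = t + 1 := by
  rw [S0, Finset.card_insert_of_notMem, Finset.card_image_of_injOn, Nat.card_Icc]
  · omega
  · intro a ha b hb hab
    rw [Finset.mem_coe, Finset.mem_Icc] at ha hb
    exact hubV_inj (by omega) (by omega) hab
  · intro hmem
    rw [Finset.mem_image] at hmem
    obtain ⟨j, hj, hje⟩ := hmem
    rw [Finset.mem_Icc] at hj
    have := congrArg Fin.val hje
    rw [hubV_val hj.2] at this
    simp at this

lemma hub_mem_S0 {t s : ℕ} (h1 : 1 ≤ s) (h2 : s ≤ t) : hubV t s ∈ S0 t := by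
  rw [S0, Finset.mem_insert]
  right
  rw [Finset.mem_image]
  exact ⟨s, by rw [Finset.mem_Icc]; omega, rfl⟩

lemma equates_S0 (t : ℕ) : equates (Gr t) 2 (Finset.univ \ S0 t) := by
  have h2n : 2 < st (t+1) + 1 := by have := two_le_st_succ t; omega
  set v0 : Fin (st (t+1) + 1) := ⟨0, by omega⟩ with hv0def
  set v1 : Fin (st (t+1) + 1) := ⟨1, by omega⟩ with hv1def
  set v2 : Fin (st (t+1) + 1) := ⟨2, h2n⟩ with hv2def
  set A := Finset.univ \ S0 t with hAdef
  have hv0S : v0 ∈ S0 t := by rw [S0]; exact Finset.mem_insert_self _ _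
  have hstpos : ∀ j : ℕ, 1 ≤ j → 2 ≤ st j := by
    intro j hj
    have := st_le_st hj
    rw [st_one] at this
    omega
  have hnothub2 : ∀ s, (2:ℕ) ≠ st s + 1 := by
    intro s h
    exact st_ne_one s (by omega)
  have hv1A : v1 ∈ A := by
    rw [hAdef, Finset.mem_sdiff]
    refine ⟨Finset.mem_univ _, ?_⟩
    rw [S0, Finset.mem_insert]
    rintro (h | h)
    · exact absurd (congrArg Fin.val h) (by simp [hv1def, hv0def])
    · rw [Finset.mem_image] at h
      obtain ⟨j, hj, hje⟩ := h
      rw [Finset.mem_Icc] at hj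
      have := congrArg Fin.val hje
      rw [hubV_val hj.2] at this
      have := hstpos j hj.1
      simp [hv1def] at *
      omega
  have hv2A : v2 ∈ A := by
    rw [hAdef, Finset.mem_sdiff]
    refine ⟨Finset.mem_univ _, ?_⟩
    rw [S0, Finset.mem_insert]
    rintro (h | h)
    · exact absurd (congrArg Fin.val h) (by simp [hv2def, hv0def])
    · rw [Finset.mem_image] at h
      obtain ⟨j, hj, hje⟩ := h
      rw [Finset.mem_Icc] at hj
      have := congrArg Fin.val hje
      rw [hubV_val hj.2] at this
      exact hnothub2 j this.symm
  have hv1hub : v1 = hubV t 0 := by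
    apply Fin.val_injective
    rw [hubV_val (by omega), st_zero]
  have hadj12 : (Gr t).Adj v1 v2 := by
    rw [hv1hub]
    rw [adj_hub (by omega)]
    right
    rw [st_zero, show (0:ℕ)+1 = 1 from rfl, st_one]
    exact ⟨le_refl _, le_refl _⟩
  have hd1 : degOn (Gr t) A v1 = 1 := by
    refine Eq.trans (degOn_eq_card _ _ _ ({v2} : Finset (Fin (st (t+1)+1))) ?_)
      (Finset.card_singleton _)
    intro w
    rw [Finset.mem_singleton]
    constructor
    · rintro rfl
      exact ⟨hv2A, hadj12⟩
    · rintro ⟨hwA, hadj⟩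
      rw [hv1hub, adj_hub (by omega)] at hadj
      rcases hadj with h | ⟨ha, hb⟩
      · exfalso
        rw [st_zero] at h
        have : w = v0 := Fin.val_injective (by rw [h])

        rw [hAdef, Finset.mem_sdiff] at hwA
        exact hwA.2 (this ▸ hv0S)
      · rw [st_zero] at ha
        simp only [Nat.zero_add, st_one] at hb
        have hv2v : v2.val = 2 := rfl
        exact Fin.val_injective (by omega)
  have hd2 : degOn (Gr t) A v2 = 1 := by
    refine Eq.trans (degOn_eq_card _ _ _ ({v1} : Finset (Fin (st (t+1)+1))) ?_)
      (Finset.card_singleton _)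
    intro w
    rw [Finset.mem_singleton]
    constructor
    · rintro rfl
      exact ⟨hv1A, hadj12.symm⟩
    · rintro ⟨hwA, hadj⟩
      obtain ⟨s, hst, hval⟩ := adj_nonhub_hub (fun s => hnothub2 s) hadj
      rcases Nat.eq_zero_or_pos s with rfl | hs1
      · rw [st_zero] at hval
        exact Fin.val_injective (by rw [hval])
      · exfalso
        have : w = hubV t s := Fin.val_injective (by rw [hval, hubV_val hst])
        rw [hAdef, Finset.mem_sdiff] at hwA
        exact hwA.2 (this ▸ hub_mem_S0 hs1 hst)
  have hle : ∀ w ∈ A, degOn (Gr t) A w ≤ 1 := by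
    intro w hwA
    by_cases hwhub : ∃ r, w.val = st r + 1
    · obtain ⟨r, hr⟩ := hwhub
      have hrt : r ≤ t := hub_index_le w hr
      have hw' : w = hubV t r := Fin.val_injective (by rw [hr, hubV_val hrt])
      rcases Nat.eq_zero_or_pos r with rfl | hr1
      · rw [hw', ← hv1hub, hd1]
      · exfalso
        rw [hAdef, Finset.mem_sdiff] at hwA
        exact hwA.2 (hw' ▸ hub_mem_S0 hr1 hrt)
    · push_neg at hwhub
      exact deg_le_one_hubdepleted t (S0 t) (fun s h1 h2 => hub_mem_S0 h1 h2) hwhub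
  have hmax : maxDegOn (Gr t) A = 1 :=
    (maxDegOn_eq (Gr t) A v1 hv1A (fun w hw => by rw [hd1]; exact hle w hw)).trans hd1
  exact equates_of_two (Gr t) A v1 v2
    (fun h => by exact absurd (congrArg Fin.val h) (by simp [hv1def, hv2def]))
    hv1A hv2A (by rw [hd1, hmax]) (by rw [hd2, hmax])

lemma fk_Gr (t : ℕ) : fk (Gr t) 2 = t + 1 := by
  have hinst : (fun (a b : Fin (st (t+1) + 1)) => Classical.propDecidable (a = b))
      = (instDecidableEqFin (st (t+1) + 1)) := Subsingleton.elim _ _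
  unfold fk fkOn
  apply le_antisymm
  · apply Nat.sInf_le
    refine ⟨S0 t, Finset.subset_univ _, card_S0 t, ?_⟩
    rw [hinst]
    exact equates_S0 t
  · apply le_csInf
    · refine ⟨t+1, S0 t, Finset.subset_univ _, card_S0 t, ?_⟩
      rw [hinst]
      exact equates_S0 t
    · rintro m ⟨S, _, hcard, heq⟩
      by_contra hc
      push_neg at hc
      rw [hinst] at heq
      exact lower_main t S (by omega) heq

end Bounds

section Tree

lemma reachable_zero (t : ℕ) (v : Fin (st (t+1) + 1)) :
    (Gr t).Reachable v ⟨0, by omega⟩ := by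
  suffices h : ∀ m (v : Fin (st (t+1) + 1)), v.val = m →
      (Gr t).Reachable v ⟨0, by omega⟩ from h v.val v rfl
  intro m
  induction m using Nat.strong_induction_on with
  | _ m ih =>
    intro v hv
    rcases Nat.eq_zero_or_pos m with rfl | h1
    · have : v = ⟨0, by omega⟩ := Fin.val_injective hv
      rw [this]
    · have hpalt : pa v.val < v.val := pa_lt (by omega)
      have hun : pa v.val < st (t+1) + 1 := by have := v.isLt; omega
      have hadj : (Gr t).Adj (⟨pa v.val, hun⟩ : Fin (st (t+1) + 1)) v :=
        Or.inl ⟨rfl, by omega⟩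
      exact (hadj.symm.reachable).trans (ih (pa v.val) (by omega) _ rfl)

lemma gr_connected (t : ℕ) : (Gr t).Connected := by
  rw [SimpleGraph.connected_iff]
  exact ⟨fun u v => (reachable_zero t u).trans (reachable_zero t v).symm, ⟨⟨0, by omega⟩⟩⟩

lemma pa_iter_le (k : ℕ) : ∀ m, pa^[k] m ≤ m := by
  induction k with
  | zero => intro m; simp
  | succ k ih =>
    intro m
    rw [Function.iterate_succ_apply]
    exact le_trans (ih (pa m)) (pa_le m)

lemma reach_iff_pres {W : Type*} (G' : SimpleGraph W) (P : W → Prop)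
    (hP : ∀ a b, G'.Adj a b → (P a ↔ P b)) {u v : W} (h : G'.Reachable u v) :
    P u ↔ P v := by
  obtain ⟨w⟩ := h
  induction w with
  | nil => exact Iff.rfl
  | cons hadj p ih => exact (hP _ _ hadj).trans ih

lemma bridge_aux (t : ℕ) (x y : Fin (st (t+1) + 1)) (hx : x.val = pa y.val)
    (hy : 1 ≤ y.val) :
    ¬ ((Gr t) \ SimpleGraph.fromEdgeSet {s(x,y)}).Reachable x y := by
  intro hreach
  set P : Fin (st (t+1) + 1) → Prop := fun u => ∃ k, pa^[k] u.val = y.val with hPdef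
  have one : ∀ a b : Fin (st (t+1) + 1), a.val = pa b.val → 1 ≤ b.val →
      s(a,b) ≠ s(x,y) → (P a ↔ P b) := by
    intro a b hab hb hne
    constructor
    · rintro ⟨k, hk⟩
      exact ⟨k+1, by rw [Function.iterate_succ_apply, ← hab, hk]⟩
    · rintro ⟨k, hk⟩
      cases k with
      | zero =>
        exfalso
        apply hne
        simp only [Function.iterate_zero, id] at hk
        have hby : b = y := Fin.val_injective hk
        have hax : a = x := Fin.val_injective (by rw [hab, hby, hx])
        rw [hby, hax]
      | succ k =>
        refine ⟨k, ?_⟩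
        rw [Function.iterate_succ_apply] at hk
        rw [hab]
        exact hk
  have key : ∀ a b, ((Gr t) \ SimpleGraph.fromEdgeSet {s(x,y)}).Adj a b → (P a ↔ P b) := by
    intro a b hadj
    rw [SimpleGraph.sdiff_adj] at hadj
    obtain ⟨hG, hnotE⟩ := hadj
    have hne : s(a,b) ≠ s(x,y) := by
      intro he
      exact hnotE ((SimpleGraph.fromEdgeSet_adj _).mpr ⟨by rw [he]; exact Set.mem_singleton _, hG.ne⟩)
    rcases gr_adj.mp hG with ⟨h1, h2⟩ | ⟨h1, h2⟩
    · exact one a b h1 h2 hne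
    · exact (one b a h1 h2 (by rw [Sym2.eq_swap]; exact hne)).symm
  have hiff := reach_iff_pres _ P key hreach
  have hPy : P y := ⟨0, rfl⟩
  have hPx : ¬ P x := by
    rintro ⟨k, hk⟩
    have h1 : pa^[k] x.val ≤ x.val := pa_iter_le k _
    have h2 : pa y.val < y.val := pa_lt hy
    omega
  exact hPx (hiff.mpr hPy)

lemma gr_acyclic (t : ℕ) : (Gr t).IsAcyclic := by
  rw [SimpleGraph.isAcyclic_iff_forall_adj_isBridge]
  intro x y hadj
  rcases gr_adj.mp hadj with ⟨h1, h2⟩ | ⟨h1, h2⟩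
  · exact SimpleGraph.isBridge_iff.mpr (bridge_aux t x y h1 h2)
  · rw [Sym2.eq_swap]
    exact SimpleGraph.isBridge_iff.mpr (bridge_aux t y x h1 h2)

end Tree

section Arith

lemma Dd_closed (s : ℕ) : 2 * Dd s = s^2 + 3*s + 4 := by
  induction s with
  | zero => norm_num [Dd]
  | succ s ih =>
    calc 2 * Dd (s+1) = 2 * Dd s + 2*s + 4 := by simp only [Dd]; ring
      _ = (s^2 + 3*s + 4) + 2*s + 4 := by rw [ih]
      _ = (s+1)^2 + 3*(s+1) + 4 := by ring

lemma st_closed (s : ℕ) : 6 * st s = s^3 + 3*s^2 + 8*s := by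
  induction s with
  | zero => norm_num [st]
  | succ s ih =>
    calc 6 * st (s+1) = 6 * st s + 3 * (2 * Dd s) := by rw [st_succ]; ring
      _ = (s^3 + 3*s^2 + 8*s) + 3 * (s^2 + 3*s + 4) := by rw [ih, Dd_closed]
      _ = (s+1)^3 + 3*(s+1)^2 + 8*(s+1) := by ring

lemma n_closed (t : ℕ) : 6 * (st (t+1) + 1) = t^3 + 6*t^2 + 17*t + 18 := by
  calc 6 * (st (t+1) + 1) = 6 * st (t+1) + 6 := by ring
    _ = ((t+1)^3 + 3*(t+1)^2 + 8*(t+1)) + 6 := by rw [st_closed]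
    _ = t^3 + 6*t^2 + 17*t + 18 := by ring

end Arith

end Stmt14

/-- For every `t ≥ 0` there is a tree `T` on exactly
`(t³ + 6t² + 17t + 18)/6` vertices with `f(T) = t + 1`. -/
theorem stmt14 (t : ℕ) :
    ∃ (n : ℕ) (T : SimpleGraph (Fin n)), T.Connected ∧ T.IsAcyclic ∧
      6 * n = t ^ 3 + 6 * t ^ 2 + 17 * t + 18 ∧ fk T 2 = t + 1 := by
  exact ⟨Stmt14.st (t+1) + 1, Stmt14.Gr t, Stmt14.gr_connected t, Stmt14.gr_acyclic t,
    Stmt14.n_closed t, Stmt14.fk_Gr t⟩
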